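/- For real affine automorphisms L, R of R^2 and a quadratic polynomial map f : R^2 -> R^2, one has det Φ_1(L ∘ f ∘ R) = J(L)^2 · J(R)^4 · det Φ_1(f), where Φ_1(f) is the 2×2 symmetric matrix of the degree-2 homogeneous part of 2·J(f) and J denotes the (constant) Jacobian determinant of an affine map. In particular, the sign of det Φ_1(f) is invariant under linear equivalence over R. -/

import Mathlib

/-- The Jacobian determinant of a map `ℝ² → ℝ²`. -/
noncomputable def jacDetR (f : ℝ × ℝ → ℝ × ℝ) (p : ℝ × ℝ) : ℝ :=
  fderiv ℝ (fun q => (f q).1) p (1, 0) * fderiv ℝ (fun q => (f q).2) p (0, 1)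
  - fderiv ℝ (fun q => (f q).1) p (0, 1) * fderiv ℝ (fun q => (f q).2) p (1, 0)

/-- The coefficient `A` of `x²` in the (quadratic polynomial) Jacobian determinant. -/
noncomputable def quadA (f : ℝ × ℝ → ℝ × ℝ) : ℝ :=
  (jacDetR f (1, 0) + jacDetR f (-1, 0) - 2 * jacDetR f (0, 0)) / 2

/-- The coefficient `C` of `y²` in the Jacobian determinant. -/
noncomputable def quadC (f : ℝ × ℝ → ℝ × ℝ) : ℝ :=
  (jacDetR f (0, 1) + jacDetR f (0, -1) - 2 * jacDetR f (0, 0)) / 2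

/-- The coefficient `B` of `xy` in the Jacobian determinant. -/
noncomputable def quadB (f : ℝ × ℝ → ℝ × ℝ) : ℝ :=
  (jacDetR f (1, 1) + jacDetR f (-1, -1) - 2 * jacDetR f (0, 0)) / 2 - quadA f - quadC f

/-- `det Φ₁(f) = 4AC - B²`, the determinant of the matrix `[[2A, B], [B, 2C]]` of the
degree-2 homogeneous part of `2·J(f)`. -/
noncomputable def phi1det (f : ℝ × ℝ → ℝ × ℝ) : ℝ :=
  4 * quadA f * quadC f - quadB f ^ 2

/-- A real affine automorphism of `ℝ²`. -/
structure AffR where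
  m11 : ℝ
  m12 : ℝ
  m21 : ℝ
  m22 : ℝ
  t1 : ℝ
  t2 : ℝ
  inv : m11 * m22 - m12 * m21 ≠ 0

/-- The underlying map of a real affine automorphism. -/
def AffR.toFun (A : AffR) (p : ℝ × ℝ) : ℝ × ℝ :=
  (A.m11 * p.1 + A.m12 * p.2 + A.t1, A.m21 * p.1 + A.m22 * p.2 + A.t2)

lemma fderiv_quad' (a b c d e f : ℝ) (p v : ℝ × ℝ) :
    fderiv ℝ (fun q : ℝ × ℝ => a * q.1 ^ 2 + b * q.1 * q.2 + c * q.2 ^ 2 + d * q.1 + e * q.2 + f) p v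
      = (2 * a * p.1 + b * p.2 + d) * v.1 + (b * p.1 + 2 * c * p.2 + e) * v.2 := by
  have h1 : HasFDerivAt (fun q : ℝ × ℝ => q.1) (ContinuousLinearMap.fst ℝ ℝ ℝ) p := hasFDerivAt_fst
  have h2 : HasFDerivAt (fun q : ℝ × ℝ => q.2) (ContinuousLinearMap.snd ℝ ℝ ℝ) p := hasFDerivAt_snd
  have H := ((((((h1.mul h1).const_mul a).add ((h1.mul h2).const_mul b)).add
      ((h2.mul h2).const_mul c)).add (h1.const_mul d)).add (h2.const_mul e)).add_const f
  have hfun : (fun q : ℝ × ℝ => a * q.1 ^ 2 + b * q.1 * q.2 + c * q.2 ^ 2 + d * q.1 + e * q.2 + f)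
      = fun q : ℝ × ℝ => a * (q.1 * q.1) + b * (q.1 * q.2) + c * (q.2 * q.2) + d * q.1 + e * q.2 + f := by
    funext q; ring
  have H' : HasFDerivAt (fun q : ℝ × ℝ => a * (q.1 * q.1) + b * (q.1 * q.2) + c * (q.2 * q.2) + d * q.1 + e * q.2 + f) _ p := H
  rw [hfun, H'.fderiv]
  simp
  ring

lemma jac_quad' (a1 b1 c1 d1 e1 f1 a2 b2 c2 d2 e2 f2 : ℝ) (p : ℝ × ℝ) :
    jacDetR (fun q : ℝ × ℝ =>
        (a1 * q.1 ^ 2 + b1 * q.1 * q.2 + c1 * q.2 ^ 2 + d1 * q.1 + e1 * q.2 + f1,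
         a2 * q.1 ^ 2 + b2 * q.1 * q.2 + c2 * q.2 ^ 2 + d2 * q.1 + e2 * q.2 + f2)) p
      = (2 * a1 * p.1 + b1 * p.2 + d1) * (b2 * p.1 + 2 * c2 * p.2 + e2)
        - (b1 * p.1 + 2 * c1 * p.2 + e1) * (2 * a2 * p.1 + b2 * p.2 + d2) := by
  show fderiv ℝ (fun q : ℝ × ℝ => a1 * q.1 ^ 2 + b1 * q.1 * q.2 + c1 * q.2 ^ 2 + d1 * q.1 + e1 * q.2 + f1) p (1, 0)
      * fderiv ℝ (fun q : ℝ × ℝ => a2 * q.1 ^ 2 + b2 * q.1 * q.2 + c2 * q.2 ^ 2 + d2 * q.1 + e2 * q.2 + f2) p (0, 1)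
    - fderiv ℝ (fun q : ℝ × ℝ => a1 * q.1 ^ 2 + b1 * q.1 * q.2 + c1 * q.2 ^ 2 + d1 * q.1 + e1 * q.2 + f1) p (0, 1)
      * fderiv ℝ (fun q : ℝ × ℝ => a2 * q.1 ^ 2 + b2 * q.1 * q.2 + c2 * q.2 ^ 2 + d2 * q.1 + e2 * q.2 + f2) p (1, 0) = _
  rw [fderiv_quad', fderiv_quad', fderiv_quad', fderiv_quad']
  norm_num

lemma phi1det_quad' (a1 b1 c1 d1 e1 f1 a2 b2 c2 d2 e2 f2 : ℝ) :
    phi1det (fun q : ℝ × ℝ =>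
        (a1 * q.1 ^ 2 + b1 * q.1 * q.2 + c1 * q.2 ^ 2 + d1 * q.1 + e1 * q.2 + f1,
         a2 * q.1 ^ 2 + b2 * q.1 * q.2 + c2 * q.2 ^ 2 + d2 * q.1 + e2 * q.2 + f2))
      = 4 * (2 * a1 * b2 - 2 * a2 * b1) * (2 * b1 * c2 - 2 * b2 * c1)
        - (4 * a1 * c2 - 4 * a2 * c1) ^ 2 := by
  simp only [phi1det, quadA, quadB, quadC, jac_quad']
  norm_num
  ring

/-- For affine automorphisms `L, R` of `ℝ²` and a quadratic map `f`,
`det Φ₁(L ∘ f ∘ R) = J(L)² · J(R)⁴ · det Φ₁(f)`; in particular the sign of `det Φ₁` is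
invariant under linear equivalence over `ℝ`. -/
theorem stmt_17 (L R : AffR) (a1 b1 c1 d1 e1 f1 a2 b2 c2 d2 e2 f2 : ℝ)
    (F : ℝ × ℝ → ℝ × ℝ)
    (hF : F = fun q : ℝ × ℝ =>
        (a1 * q.1 ^ 2 + b1 * q.1 * q.2 + c1 * q.2 ^ 2 + d1 * q.1 + e1 * q.2 + f1,
         a2 * q.1 ^ 2 + b2 * q.1 * q.2 + c2 * q.2 ^ 2 + d2 * q.1 + e2 * q.2 + f2)) :
    phi1det (L.toFun ∘ F ∘ R.toFun)
        = (L.m11 * L.m22 - L.m12 * L.m21) ^ 2 * (R.m11 * R.m22 - R.m12 * R.m21) ^ 4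
          * phi1det F ∧
      (0 < phi1det (L.toFun ∘ F ∘ R.toFun) ↔ 0 < phi1det F) := by
  have hG : (L.toFun ∘ F ∘ R.toFun) = fun q : ℝ × ℝ =>
      ((L.m11 * R.m11 * R.m11 * a1 + L.m11 * R.m11 * R.m21 * b1 + L.m11 * R.m21 * R.m21 * c1 + L.m12 * R.m11 * R.m11 * a2 + L.m12 * R.m11 * R.m21 * b2 + L.m12 * R.m21 * R.m21 * c2) * q.1 ^ 2 + (2 * L.m11 * R.m11 * R.m12 * a1 + L.m11 * R.m11 * R.m22 * b1 + L.m11 * R.m12 * R.m21 * b1 + 2 * L.m11 * R.m21 * R.m22 * c1 + 2 * L.m12 * R.m11 * R.m12 * a2 + L.m12 * R.m11 * R.m22 * b2 + L.m12 * R.m12 * R.m21 * b2 + 2 * L.m12 * R.m21 * R.m22 * c2) * q.1 * q.2 + (L.m11 * R.m12 * R.m12 * a1 + L.m11 * R.m12 * R.m22 * b1 + L.m11 * R.m22 * R.m22 * c1 + L.m12 * R.m12 * R.m12 * a2 + L.m12 * R.m12 * R.m22 * b2 + L.m12 * R.m22 * R.m22 * c2) * q.2 ^ 2 + (2 * L.m11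 * R.m11 * R.t1 * a1 + L.m11 * R.m11 * R.t2 * b1 + L.m11 * R.m11 * d1 + L.m11 * R.m21 * R.t1 * b1 + 2 * L.m11 * R.m21 * R.t2 * c1 + L.m11 * R.m21 * e1 + 2 * L.m12 * R.m11 * R.t1 * a2 + L.m12 * R.m11 * R.t2 * b2 + L.m12 * R.m11 * d2 + L.m12 * R.m21 * R.t1 * b2 + 2 * L.m12 * R.m21 * R.t2 * c2 + L.m12 * R.m21 * e2) * q.1 + (2 * L.m11 * R.m12 * R.t1 * a1 + L.m11 * R.m12 * R.t2 * b1 + L.m11 * R.m12 * d1 + L.m11 * R.m22 * R.t1 * b1 + 2 * L.m11 * R.m22 * R.t2 * c1 + L.m11 * R.m22 * e1 + 2 * L.m12 * R.m12 * R.t1 * a2 + L.m12 * R.m12 * R.t2 * b2 + L.m12 * R.m12 * d2 + L.m12 * R.m22 * R.t1 * b2 + 2 * L.m12 * R.m22 * R.t2 * c2 + L.m12 * R.m22 * e2) * q.2 + (L.m11 * R.t1 * R.t1 * a1 + L.m11 * R.t1 * R.t2 * b1 + L.m11 * R.t1 * d1 + L.m11 * R.t2 * R.t2 * c1 + L.m11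 * R.t2 * e1 + L.m11 * f1 + L.m12 * R.t1 * R.t1 * a2 + L.m12 * R.t1 * R.t2 * b2 + L.m12 * R.t1 * d2 + L.m12 * R.t2 * R.t2 * c2 + L.m12 * R.t2 * e2 + L.m12 * f2 + L.t1),
       (L.m21 * R.m11 * R.m11 * a1 + L.m21 * R.m11 * R.m21 * b1 + L.m21 * R.m21 * R.m21 * c1 + L.m22 * R.m11 * R.m11 * a2 + L.m22 * R.m11 * R.m21 * b2 + L.m22 * R.m21 * R.m21 * c2) * q.1 ^ 2 + (2 * L.m21 * R.m11 * R.m12 * a1 + L.m21 * R.m11 * R.m22 * b1 + L.m21 * R.m12 * R.m21 * b1 + 2 * L.m21 * R.m21 * R.m22 * c1 + 2 * L.m22 * R.m11 * R.m12 * a2 + L.m22 * R.m11 * R.m22 * b2 + L.m22 * R.m12 * R.m21 * b2 + 2 * L.m22 * R.m21 * R.m22 * c2) * q.1 * q.2 + (L.m21 * R.m12 * R.m12 * a1 + L.m21 * R.m12 * R.m22 * b1 + L.m21 * R.m22 * R.m22 * c1 + L.m22 * R.m12 * R.m12 * a2 + L.m22 * R.m12 * R.m22 * b2 + L.m22 *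 R.m22 * R.m22 * c2) * q.2 ^ 2 + (2 * L.m21 * R.m11 * R.t1 * a1 + L.m21 * R.m11 * R.t2 * b1 + L.m21 * R.m11 * d1 + L.m21 * R.m21 * R.t1 * b1 + 2 * L.m21 * R.m21 * R.t2 * c1 + L.m21 * R.m21 * e1 + 2 * L.m22 * R.m11 * R.t1 * a2 + L.m22 * R.m11 * R.t2 * b2 + L.m22 * R.m11 * d2 + L.m22 * R.m21 * R.t1 * b2 + 2 * L.m22 * R.m21 * R.t2 * c2 + L.m22 * R.m21 * e2) * q.1 + (2 * L.m21 * R.m12 * R.t1 * a1 + L.m21 * R.m12 * R.t2 * b1 + L.m21 * R.m12 * d1 + L.m21 * R.m22 * R.t1 * b1 + 2 * L.m21 * R.m22 * R.t2 * c1 + L.m21 * R.m22 * e1 + 2 * L.m22 * R.m12 * R.t1 * a2 + L.m22 * R.m12 * R.t2 * b2 + L.m22 * R.m12 * d2 + L.m22 * R.m22 * R.t1 * b2 + 2 * L.m22 * R.m22 * R.t2 * c2 + L.m22 * R.m22 * e2) * q.2 + (L.m21 * R.t1 * R.t1 * a1 + L.m21 * R.t1 * R.t2 * b1 + L.m21 *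 R.t1 * d1 + L.m21 * R.t2 * R.t2 * c1 + L.m21 * R.t2 * e1 + L.m21 * f1 + L.m22 * R.t1 * R.t1 * a2 + L.m22 * R.t1 * R.t2 * b2 + L.m22 * R.t1 * d2 + L.m22 * R.t2 * R.t2 * c2 + L.m22 * R.t2 * e2 + L.m22 * f2 + L.t2)) := by
    funext q
    subst hF
    simp only [Function.comp, AffR.toFun, Prod.mk.injEq]
    constructor <;> ring
  have h1 : phi1det (L.toFun ∘ F ∘ R.toFun)
      = (L.m11 * L.m22 - L.m12 * L.m21) ^ 2 * (R.m11 * R.m22 - R.m12 * R.m21) ^ 4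
        * phi1det F := by
    rw [hG, phi1det_quad', hF, phi1det_quad']
    ring
  refine ⟨h1, ?_⟩
  have hL := L.inv
  have hR := R.inv
  have hpos : 0 < (L.m11 * L.m22 - L.m12 * L.m21) ^ 2 * (R.m11 * R.m22 - R.m12 * R.m21) ^ 4 := by
    positivity
  rw [h1]
  constructor
  · intro h
    by_contra hc
    push_neg at hc
    nlinarith
  · intro h
    positivity
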